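/- Let ω ⊆ ℝᵐ be nonempty and let u : ω → ℝⁿ be Lipschitz, with Lip(u;ω) := sup_{x≠y∈ω} ‖u(x) − u(y)‖/‖x−y‖. Define Ω := {(x,0) : x ∈ ω} ⊆ ℝᵐ × ℝⁿ = ℝ^{m+n} and the 1-field F on Ω by f_{(x,0)} := 0 and D_{(x,0)}f := (0, u(x)) for x ∈ ω. Then Γ¹(F;Ω) = Lip(u;ω). -/

import Mathlib

noncomputable section

open scoped RealInnerProductSpace

section GammaDefs

variable {H : Type*} [NormedAddCommGroup H] [InnerProductSpace ℝ H]

/-- Evaluation of the first-degree polynomial `F(x)` at `a`: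
`F(x)(a) = f_x + ⟨D_xf, a - x⟩`. -/
def fieldEval (f : H → ℝ) (Df : H → H) (x a : H) : ℝ :=
  f x + ⟪Df x, a - x⟫

/-- `Γ¹(F; x, y) = 2 · sup_{a} |F(x)(a) - F(y)(a)| / (‖x-a‖² + ‖y-a‖²)` for `x ≠ y`. -/
def gammaPair (f : H → ℝ) (Df : H → H) (x y : H) : ℝ :=
  ⨆ a : H, 2 * |fieldEval f Df x a - fieldEval f Df y a| / (‖x - a‖ ^ 2 + ‖y - a‖ ^ 2)

/-- The set of values `Γ¹(F; x, y)` for `x ≠ y` ranging over `S`. -/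
def gammaVals (f : H → ℝ) (Df : H → H) (S : Set H) : Set ℝ :=
  {t | ∃ x ∈ S, ∃ y ∈ S, x ≠ y ∧ t = gammaPair f Df x y}

/-- `Γ¹(F; S) = sup_{x ≠ y ∈ S} Γ¹(F; x, y)` (real supremum, `0` if `S` has at most one point). -/
def gammaOn (f : H → ℝ) (Df : H → H) (S : Set H) : ℝ :=
  sSup (gammaVals f Df S)

end GammaDefs

section LipDefs

variable {α β : Type*} [NormedAddCommGroup α] [NormedAddCommGroup β]

/-- The set of difference quotients `‖g x - g y‖ / ‖x - y‖`, `x ≠ y ∈ S`. -/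
def lipVals (g : α → β) (S : Set α) : Set ℝ :=
  {t | ∃ x ∈ S, ∃ y ∈ S, x ≠ y ∧ t = ‖g x - g y‖ / ‖x - y‖}

/-- `Lip(g; S) = sup_{x ≠ y ∈ S} ‖g x - g y‖ / ‖x - y‖` (real supremum). -/
def lipOn (g : α → β) (S : Set α) : ℝ :=
  sSup (lipVals g S)

end LipDefs

section PsiDefs

variable {H : Type*} [NormedAddCommGroup H] [InnerProductSpace ℝ H]

/-- `v_{a,b} = ½(D_af + D_bf) + (κ/2)(b - a)`. -/
def vab (Df : H → H) (κ : ℝ) (a b : H) : H :=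
  (1 / 2 : ℝ) • (Df a + Df b) + (κ / 2) • (b - a)

/-- `α_{a,b}`. -/
def alphaab (f : H → ℝ) (Df : H → H) (κ : ℝ) (a b : H) : ℝ :=
  2 * κ * (f a - f b) + κ * ⟪Df a + Df b, b - a⟫
    - 1 / 2 * ‖Df a - Df b‖ ^ 2 + κ ^ 2 / 2 * ‖a - b‖ ^ 2

/-- `β_{a,b}(x)`. -/
def betaab (Df : H → H) (κ : ℝ) (a b x : H) : ℝ :=
  ‖(1 / 2 : ℝ) • (Df a - Df b) + (κ / 2) • ((2 : ℝ) • x - a - b)‖ ^ 2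

/-- `r_{a,b}(x) = √(α_{a,b} + β_{a,b}(x))`. -/
def rab (f : H → ℝ) (Df : H → H) (κ : ℝ) (a b x : H) : ℝ :=
  Real.sqrt (alphaab f Df κ a b + betaab Df κ a b x)

/-- `Λ_x = {v : ‖v - v_{a,b}‖ ≤ r_{a,b}(x) for all a, b ∈ Ω}`. -/
def Lambda (f : H → ℝ) (Df : H → H) (κ : ℝ) (Ω : Set H) (x : H) : Set H :=
  {v | ∀ a ∈ Ω, ∀ b ∈ Ω, ‖v - vab Df κ a b‖ ≤ rab f Df κ a b x}

/-- `Ψ⁺(F, x, a, v)`. -/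
def PsiPlus (f : H → ℝ) (Df : H → H) (κ : ℝ) (x a v : H) : ℝ :=
  f a + 1 / 2 * ⟪Df a + v, x - a⟫ + κ / 4 * ‖a - x‖ ^ 2 - 1 / (4 * κ) * ‖Df a - v‖ ^ 2

/-- `Ψ⁻(F, x, a, v)`. -/
def PsiMinus (f : H → ℝ) (Df : H → H) (κ : ℝ) (x a v : H) : ℝ :=
  f a + 1 / 2 * ⟪Df a + v, x - a⟫ - κ / 4 * ‖a - x‖ ^ 2 + 1 / (4 * κ) * ‖Df a - v‖ ^ 2

/-- `inf_{a ∈ Ω} Ψ⁺(F, x, a, v)`. -/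
def infPsiPlus (f : H → ℝ) (Df : H → H) (κ : ℝ) (Ω : Set H) (x v : H) : ℝ :=
  sInf {t | ∃ a ∈ Ω, t = PsiPlus f Df κ x a v}

/-- `sup_{a ∈ Ω} Ψ⁻(F, x, a, v)`. -/
def supPsiMinus (f : H → ℝ) (Df : H → H) (κ : ℝ) (Ω : Set H) (x v : H) : ℝ :=
  sSup {t | ∃ a ∈ Ω, t = PsiMinus f Df κ x a v}

/-- `u⁺(x) = sup_{v ∈ Λ_x} inf_{a ∈ Ω} Ψ⁺(F, x, a, v)`. -/
def uPlus (f : H → ℝ) (Df : H → H) (κ : ℝ) (Ω : Set H) (x : H) : ℝ :=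
  sSup {t | ∃ v ∈ Lambda f Df κ Ω x, t = infPsiPlus f Df κ Ω x v}

/-- `u⁻(x) = inf_{v ∈ Λ_x} sup_{a ∈ Ω} Ψ⁻(F, x, a, v)`. -/
def uMinus (f : H → ℝ) (Df : H → H) (κ : ℝ) (Ω : Set H) (x : H) : ℝ :=
  sInf {t | ∃ v ∈ Lambda f Df κ Ω x, t = supPsiMinus f Df κ Ω x v}

/-- `(g, Dg)` is a minimal Lipschitz extension of the 1-field `(f, Df)` of domain `Ω` to `H`. -/
def IsMLE (f : H → ℝ) (Df : H → H) (Ω : Set H) (g : H → ℝ) (Dg : H → H) : Prop :=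
  (∀ x ∈ Ω, g x = f x ∧ Dg x = Df x) ∧ gammaOn g Dg Set.univ = gammaOn f Df Ω

/-- Over extremal MLE. -/
def IsOverExtremal (f : H → ℝ) (Df : H → H) (Ω : Set H) (g₁ : H → ℝ) (Dg₁ : H → H) : Prop :=
  IsMLE f Df Ω g₁ Dg₁ ∧ ∀ g Dg, IsMLE f Df Ω g Dg → ∀ x, g x ≤ g₁ x

/-- Under extremal MLE. -/
def IsUnderExtremal (f : H → ℝ) (Df : H → H) (Ω : Set H) (g₂ : H → ℝ) (Dg₂ : H → H) : Prop :=
  IsMLE f Df Ω g₂ Dg₂ ∧ ∀ g Dg, IsMLE f Df Ω g Dg → ∀ x, g₂ x ≤ g x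

/-- Absolutely minimal Lipschitz extension. -/
def IsAMLE (f : H → ℝ) (Df : H → H) (Ω : Set H) (g : H → ℝ) (Dg : H → H) : Prop :=
  IsMLE f Df Ω g Dg ∧
    ∀ V : Set H, V.Nonempty → IsOpen V → Bornology.IsBounded V → closure V ⊆ Ωᶜ →
      gammaOn g Dg V = gammaOn g Dg (frontier V)

end PsiDefs
/-- `ℝ^{m+n} = ℝᵐ × ℝⁿ` with the Euclidean (L²) norm. -/
abbrev ProdSp (m n : ℕ) :=
  WithLp 2 (EuclideanSpace ℝ (Fin m) × EuclideanSpace ℝ (Fin n))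

/-- The embedding `x ↦ (x, 0)` of `ℝᵐ` into `ℝ^{m+n}`. -/
def kirszEmb (m n : ℕ) (x : EuclideanSpace ℝ (Fin m)) : ProdSp m n :=
  (WithLp.equiv 2 (EuclideanSpace ℝ (Fin m) × EuclideanSpace ℝ (Fin n))).symm (x, 0)

/-- The `ℝⁿ`-component of an element of `ℝ^{m+n}`. -/
def sndComp {m n : ℕ} (z : ProdSp m n) : EuclideanSpace ℝ (Fin n) :=
  ((WithLp.equiv 2 (EuclideanSpace ℝ (Fin m) × EuclideanSpace ℝ (Fin n))) z).2

/-- The gradient field `z ↦ (0, u(z^{(m)}))` of the 1-field associated with `u`. -/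
def kirszDf {m n : ℕ} (u : EuclideanSpace ℝ (Fin m) → EuclideanSpace ℝ (Fin n)) :
    ProdSp m n → ProdSp m n :=
  fun z =>
    (WithLp.equiv 2 (EuclideanSpace ℝ (Fin m) × EuclideanSpace ℝ (Fin n))).symm
      (0, u ((WithLp.equiv 2 (EuclideanSpace ℝ (Fin m) × EuclideanSpace ℝ (Fin n))) z).1)

section Aux

variable {m n : ℕ}

private lemma kirszEmb_fst (x : EuclideanSpace ℝ (Fin m)) : (kirszEmb m n x).fst = x := rfl

private lemma kirszEmb_snd (x : EuclideanSpace ℝ (Fin m)) :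
    (kirszEmb m n x).snd = (0 : EuclideanSpace ℝ (Fin n)) := rfl

private lemma kirszEmb_inj : Function.Injective (kirszEmb m n) := by
  intro x y h
  have := congrArg (fun z : ProdSp m n => z.fst) h
  simpa [kirszEmb_fst] using this

private lemma term_eq (u : EuclideanSpace ℝ (Fin m) → EuclideanSpace ℝ (Fin n))
    (x y : EuclideanSpace ℝ (Fin m)) (a : ProdSp m n) :
    fieldEval (fun _ : ProdSp m n => (0 : ℝ)) (kirszDf u) (kirszEmb m n x) a
      - fieldEval (fun _ : ProdSp m n => (0 : ℝ)) (kirszDf u) (kirszEmb m n y) a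
      = ⟪u x - u y, a.snd⟫ := by
  simp [fieldEval, kirszDf, kirszEmb, WithLp.prod_inner_apply, WithLp.sub_fst, WithLp.sub_snd,
    inner_sub_left]

private lemma denom_eq (x y : EuclideanSpace ℝ (Fin m)) (a : ProdSp m n) :
    ‖kirszEmb m n x - a‖ ^ 2 + ‖kirszEmb m n y - a‖ ^ 2
      = ‖x - a.fst‖ ^ 2 + ‖y - a.fst‖ ^ 2 + 2 * ‖a.snd‖ ^ 2 := by
  rw [WithLp.prod_norm_sq_eq_of_L2, WithLp.prod_norm_sq_eq_of_L2]
  simp only [WithLp.sub_fst, WithLp.sub_snd, kirszEmb_fst, kirszEmb_snd, zero_sub, norm_neg]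
  ring

private lemma mid_bound (x y p : EuclideanSpace ℝ (Fin m)) :
    ‖x - y‖ ^ 2 / 2 ≤ ‖x - p‖ ^ 2 + ‖y - p‖ ^ 2 := by
  have h1 : ‖x - y‖ ≤ ‖x - p‖ + ‖y - p‖ := by
    have := norm_sub_le_norm_sub_add_norm_sub x p y
    linarith [norm_sub_rev p y ▸ this]
  nlinarith [norm_nonneg (x - y), norm_nonneg (x - p), norm_nonneg (y - p),
    sq_nonneg (‖x - p‖ - ‖y - p‖)]

private lemma term_le (u : EuclideanSpace ℝ (Fin m) → EuclideanSpace ℝ (Fin n))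
    {x y : EuclideanSpace ℝ (Fin m)} (hxy : x ≠ y) (a : ProdSp m n) :
    2 * |fieldEval (fun _ : ProdSp m n => (0 : ℝ)) (kirszDf u) (kirszEmb m n x) a
        - fieldEval (fun _ : ProdSp m n => (0 : ℝ)) (kirszDf u) (kirszEmb m n y) a|
      / (‖kirszEmb m n x - a‖ ^ 2 + ‖kirszEmb m n y - a‖ ^ 2)
      ≤ ‖u x - u y‖ / ‖x - y‖ := by
  rw [term_eq, denom_eq]
  set s := ‖x - y‖ with hs
  have hspos : 0 < s := by
    simpa [hs] using norm_sub_pos_iff.mpr (sub_ne_zero.mpr hxy)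
  set dn := ‖u x - u y‖ with hdn
  have hdn0 : 0 ≤ dn := norm_nonneg _
  set qn := ‖a.snd‖ with hq
  have hq0 : 0 ≤ qn := norm_nonneg _
  have hip : |⟪u x - u y, a.snd⟫| ≤ dn * qn := abs_real_inner_le_norm _ _
  have hmid : s ^ 2 / 2 ≤ ‖x - a.fst‖ ^ 2 + ‖y - a.fst‖ ^ 2 := mid_bound x y a.fst
  have hD : 0 < ‖x - a.fst‖ ^ 2 + ‖y - a.fst‖ ^ 2 + 2 * qn ^ 2 := by
    nlinarith [sq_nonneg qn]
  rw [div_le_div_iff₀ hD hspos]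
  nlinarith [sq_nonneg (s - 2 * qn), mul_nonneg hdn0 hq0, abs_nonneg (⟪u x - u y, a.snd⟫ : ℝ),
    mul_le_mul_of_nonneg_right hip hspos.le,
    mul_le_mul_of_nonneg_left (sq_nonneg (s - 2 * qn)) hdn0]

private lemma gammaPair_eq (u : EuclideanSpace ℝ (Fin m) → EuclideanSpace ℝ (Fin n))
    {x y : EuclideanSpace ℝ (Fin m)} (hxy : x ≠ y) :
    gammaPair (fun _ : ProdSp m n => (0 : ℝ)) (kirszDf u) (kirszEmb m n x) (kirszEmb m n y)
      = ‖u x - u y‖ / ‖x - y‖ := by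
  unfold gammaPair
  set L := ‖u x - u y‖ / ‖x - y‖ with hL
  set g : ProdSp m n → ℝ := fun a =>
    2 * |fieldEval (fun _ : ProdSp m n => (0 : ℝ)) (kirszDf u) (kirszEmb m n x) a
        - fieldEval (fun _ : ProdSp m n => (0 : ℝ)) (kirszDf u) (kirszEmb m n y) a|
      / (‖kirszEmb m n x - a‖ ^ 2 + ‖kirszEmb m n y - a‖ ^ 2) with hg
  have hbd : ∀ a, g a ≤ L := fun a => term_le u hxy a
  have hbdd : BddAbove (Set.range g) := ⟨L, by rintro _ ⟨a, rfl⟩; exact hbd a⟩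
  refine le_antisymm (ciSup_le hbd) ?_
  by_cases hd : u x - u y = 0
  · have hg0 : ∀ a, g a = 0 := by
      intro a
      simp [hg, term_eq, hd]
    have : (⨆ a, g a) = 0 := by
      simp only [hg0]; exact ciSup_const
    rw [this, hL, hd]
    simp
  · have hdnpos : 0 < ‖u x - u y‖ := norm_pos_iff.mpr hd
    have hspos : 0 < ‖x - y‖ := by simpa using norm_sub_pos_iff.mpr (sub_ne_zero.mpr hxy)
    set a₀ : ProdSp m n :=
      (WithLp.equiv 2 (EuclideanSpace ℝ (Fin m) × EuclideanSpace ℝ (Fin n))).symm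
        ((2⁻¹ : ℝ) • (x + y), (‖x - y‖ / (2 * ‖u x - u y‖)) • (u x - u y)) with ha₀
    have hfst : a₀.fst = (2⁻¹ : ℝ) • (x + y) := rfl
    have hsnd : a₀.snd = (‖x - y‖ / (2 * ‖u x - u y‖)) • (u x - u y) := rfl
    have hval : g a₀ = L := by
      have hx' : x - a₀.fst = (2⁻¹ : ℝ) • (x - y) := by
        rw [hfst]; module
      have hy' : y - a₀.fst = (-2⁻¹ : ℝ) • (x - y) := by
        rw [hfst]; module
      have hnx : ‖x - a₀.fst‖ ^ 2 = ‖x - y‖ ^ 2 / 4 := by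
        rw [hx', norm_smul]; simp; ring
      have hny : ‖y - a₀.fst‖ ^ 2 = ‖x - y‖ ^ 2 / 4 := by
        rw [hy', norm_smul]; simp; ring
      have hnq : ‖a₀.snd‖ ^ 2 = ‖x - y‖ ^ 2 / 4 := by
        rw [hsnd, norm_smul]
        rw [Real.norm_eq_abs, abs_of_nonneg (by positivity)]
        field_simp
        ring
      have hip : ⟪u x - u y, a₀.snd⟫ = ‖x - y‖ * ‖u x - u y‖ / 2 := by
        rw [hsnd, real_inner_smul_right, real_inner_self_eq_norm_sq]
        field_simp
      rw [hg]
      simp only [term_eq, denom_eq, hnx, hny, hnq, hip]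
      rw [abs_of_nonneg (by positivity)]
      rw [hL]
      field_simp
      ring
    calc L = g a₀ := hval.symm
    _ ≤ ⨆ a, g a := le_ciSup hbdd a₀

private lemma gammaVals_eq (u : EuclideanSpace ℝ (Fin m) → EuclideanSpace ℝ (Fin n))
    (ω : Set (EuclideanSpace ℝ (Fin m))) :
    gammaVals (fun _ : ProdSp m n => (0 : ℝ)) (kirszDf u) (kirszEmb m n '' ω)
      = lipVals u ω := by
  ext t
  constructor
  · rintro ⟨z, ⟨x, hx, rfl⟩, w, ⟨y, hy, rfl⟩, hne, rfl⟩
    have hxy : x ≠ y := fun h => hne (by rw [h])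
    exact ⟨x, hx, y, hy, hxy, gammaPair_eq u hxy⟩
  · rintro ⟨x, hx, y, hy, hxy, rfl⟩
    exact ⟨kirszEmb m n x, ⟨x, hx, rfl⟩, kirszEmb m n y, ⟨y, hy, rfl⟩,
      fun h => hxy (kirszEmb_inj h), (gammaPair_eq u hxy).symm⟩

end Aux

/-- Let `ω ⊆ ℝᵐ` be nonempty and `u : ω → ℝⁿ` Lipschitz. Let
`Ω := {(x, 0) : x ∈ ω} ⊆ ℝ^{m+n}` and let `F` be the 1-field on `Ω` given by `f_{(x,0)} := 0`
and `D_{(x,0)}f := (0, u(x))`. Then `Γ¹(F;Ω) = Lip(u;ω)`. -/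
theorem stmt_16 {m n : ℕ} (hm : 1 ≤ m) (hn : 1 ≤ n)
    (ω : Set (EuclideanSpace ℝ (Fin m))) (hωne : ω.Nonempty)
    (u : EuclideanSpace ℝ (Fin m) → EuclideanSpace ℝ (Fin n))
    (hu : BddAbove (lipVals u ω)) :
    gammaOn (fun _ : ProdSp m n => (0 : ℝ)) (kirszDf u) (kirszEmb m n '' ω)
      = lipOn u ω := by
  unfold gammaOn lipOn
  rw [gammaVals_eq u ω]
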